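/- Let w, ν ∈ ℝ^d with w nonzero and ⟨w, ν⟩ = 1. Then the matrix M = ‖w‖² I_d − w wᵀ + ν νᵀ is symmetric positive definite, satisfies M w = ν, and moreover wᵀ M w = 1, i.e., w has unit M-norm. -/

import Mathlib

open Matrix

lemma vecMulVec_mulVec' {d : ℕ} (a b x : Fin d → ℝ) :
    vecMulVec a b *ᵥ x = (b ⬝ᵥ x) • a := by
  funext i
  simp [mulVec, dotProduct, vecMulVec_apply, Finset.mul_sum, mul_comm, mul_left_comm]

lemma quad_eq {d : ℕ} (w ν x : Fin d → ℝ) :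
    x ⬝ᵥ (((w ⬝ᵥ w) • (1 : Matrix (Fin d) (Fin d) ℝ) - vecMulVec w w + vecMulVec ν ν) *ᵥ x)
      = (w ⬝ᵥ w) * (x ⬝ᵥ x) - (w ⬝ᵥ x) * (w ⬝ᵥ x) + (ν ⬝ᵥ x) * (ν ⬝ᵥ x) := by
  rw [add_mulVec, sub_mulVec, vecMulVec_mulVec', vecMulVec_mulVec',
    smul_mulVec, one_mulVec]
  simp [dotProduct_add, dotProduct_sub, dotProduct_smul, dotProduct_comm x w,
    dotProduct_comm x ν, smul_eq_mul]

lemma dot_eq_inner {d : ℕ} (a b : Fin d → ℝ) :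
    a ⬝ᵥ b = inner (𝕜 := ℝ) (E := EuclideanSpace ℝ (Fin d)) (WithLp.toLp 2 a) (WithLp.toLp 2 b) := by
  simp [PiLp.inner_apply, dotProduct, mul_comm, RCLike.inner_apply]

theorem stmt_5 (d : ℕ) (w ν : Fin d → ℝ) (hw : w ≠ 0) (hone : w ⬝ᵥ ν = 1) :
    ((w ⬝ᵥ w) • (1 : Matrix (Fin d) (Fin d) ℝ) - vecMulVec w w + vecMulVec ν ν).PosDef ∧
    ((w ⬝ᵥ w) • (1 : Matrix (Fin d) (Fin d) ℝ) - vecMulVec w w + vecMulVec ν ν) *ᵥ w = ν ∧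
    w ⬝ᵥ (((w ⬝ᵥ w) • (1 : Matrix (Fin d) (Fin d) ℝ) - vecMulVec w w + vecMulVec ν ν) *ᵥ w)
      = 1 := by
  have hνw : ν ⬝ᵥ w = 1 := by rw [dotProduct_comm]; exact hone
  have hMw : ((w ⬝ᵥ w) • (1 : Matrix (Fin d) (Fin d) ℝ) - vecMulVec w w + vecMulVec ν ν) *ᵥ w
      = ν := by
    rw [add_mulVec, sub_mulVec, vecMulVec_mulVec', vecMulVec_mulVec',
      smul_mulVec, one_mulVec, hνw, one_smul]
    funext i
    simp [smul_eq_mul]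
  refine ⟨PosDef.of_dotProduct_mulVec_pos ?_ ?_, hMw, ?_⟩
  · -- Hermitian
    show _ᴴ = _
    ext i j
    by_cases h : i = j
    · subst h; simp [conjTranspose_apply, vecMulVec_apply, one_apply, mul_comm]
    · simp [conjTranspose_apply, vecMulVec_apply, one_apply, h, Ne.symm h, mul_comm]
  · -- positivity
    intro x hx
    have hsx : star x = x := by funext i; simp
    rw [hsx, quad_eq]
    -- Cauchy–Schwarz in EuclideanSpace
    set W : EuclideanSpace ℝ (Fin d) := WithLp.toLp 2 w
    set X : EuclideanSpace ℝ (Fin d) := WithLp.toLp 2 x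
    set V : EuclideanSpace ℝ (Fin d) := WithLp.toLp 2 ν
    have hW : w ⬝ᵥ w = inner (𝕜 := ℝ) W W := dot_eq_inner w w
    have hXX : x ⬝ᵥ x = inner (𝕜 := ℝ) X X := dot_eq_inner x x
    have hWX : w ⬝ᵥ x = inner (𝕜 := ℝ) W X := dot_eq_inner w x
    have hcs : inner (𝕜 := ℝ) W X * inner (𝕜 := ℝ) W X
        ≤ inner (𝕜 := ℝ) W W * inner (𝕜 := ℝ) X X := real_inner_mul_inner_self_le W X
    rcases eq_or_ne (ν ⬝ᵥ x) 0 with h0 | h0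
    · -- strict Cauchy–Schwarz: x is not a multiple of w
      rw [h0, mul_zero, add_zero, sub_pos, hW, hXX, hWX]
      rcases lt_or_eq_of_le hcs with h | h
      · exact h
      · exfalso
        have hWne : W ≠ 0 := fun h => hw (by simpa [W] using congrArg WithLp.ofLp h)
        have hXne : X ≠ 0 := fun h => hx (by simpa [X] using congrArg WithLp.ofLp h)
        have habs : ‖inner (𝕜 := ℝ) W X‖ = ‖W‖ * ‖X‖ := by
          have h1 : ‖inner (𝕜 := ℝ) W X‖ ^ 2 = (‖W‖ * ‖X‖) ^ 2 := by
            rw [Real.norm_eq_abs, sq_abs, sq, sq]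
            rw [h, real_inner_self_eq_norm_mul_norm, real_inner_self_eq_norm_mul_norm]
            ring
          exact (sq_eq_sq₀ (by positivity) (by positivity)).mp h1
        obtain ⟨r, hr, hrx⟩ := (norm_inner_eq_norm_iff (𝕜 := ℝ) hWne hXne).mp habs
        have : ν ⬝ᵥ x = r := by
          have hx' : x = r • w := by simpa [X, W] using congrArg WithLp.ofLp hrx
          rw [hx']
          simp [dotProduct_smul, hνw]
        rw [this] at h0
        exact hr h0
    · have h1 : 0 ≤ (w ⬝ᵥ w) * (x ⬝ᵥ x) - (w ⬝ᵥ x) * (w ⬝ᵥ x) := by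
        rw [hW, hXX, hWX]; linarith
      have h2 : 0 < (ν ⬝ᵥ x) * (ν ⬝ᵥ x) := mul_self_pos.mpr h0
      linarith
  · rw [hMw, hone]
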